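/- arXiv:1908.04925 — 6 statements merged into one kernel-verified Lean document; each statement's English description precedes it below -/
import Mathlib

section
/- Let G be a group such that G/Z(G) is locally finite. Then the derived subgroup G' is locally finite. -/
/-- A group is locally finite if every finitely generated subgroup is finite. -/
def LocallyFiniteGroup (G : Type*) [Group G] : Prop :=
  ∀ s : Finset G, Finite (Subgroup.closure (s : Set G))

/-- A group is locally solvable if every finitely generated subgroup is solvable. -/
def LocallySolvableGroup (G : Type*) [Group G] : Prop :=
  ∀ s : Finset G, IsSolvable (Subgroup.closure (s : Set G))

/-- A group is locally nilpotent if every finitely generated subgroup is nilpotent. -/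
def LocallyNilpotentGroup (G : Type*) [Group G] : Prop :=
  ∀ s : Finset G, Group.IsNilpotent (Subgroup.closure (s : Set G))

/-- A subgroup is subnormal if there is a finite chain of successively normal
subgroups reaching the whole group. -/
def Subgroup.IsSubnormal' {G : Type*} [Group G] (H : Subgroup G) : Prop :=
  ∃ (n : ℕ) (c : ℕ → Subgroup G), c 0 = H ∧ c n = ⊤ ∧
    ∀ i < n, c i ≤ c (i + 1) ∧ ((c i).subgroupOf (c (i + 1))).Normal

/-- A subgroup is almost subnormal (Hartley) if there is a finite chain in which
each step is either of finite index or normal. -/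
def Subgroup.IsAlmostSubnormal {G : Type*} [Group G] (H : Subgroup G) : Prop :=
  ∃ (n : ℕ) (c : ℕ → Subgroup G), c 0 = H ∧ c n = ⊤ ∧
    ∀ i < n, c i ≤ c (i + 1) ∧
      (((c i).subgroupOf (c (i + 1))).Normal ∨ (c i).relIndex (c (i + 1)) ≠ 0)

open scoped commutatorElement

lemma commutator_congr_center' {M : Type*} [Group M] (a b z w : M)
    (hz : z ∈ Subgroup.center M) (hw : w ∈ Subgroup.center M) :
    ⁅a * z, b * w⁆ = ⁅a, b⁆ := by
  have hz' : ∀ x : M, x * z = z * x := Subgroup.mem_center_iff.mp hz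
  have hw' : ∀ x : M, x * w = w * x := Subgroup.mem_center_iff.mp hw
  have h1 : ∀ c : M, ⁅a * z, c⁆ = ⁅a, c⁆ := by
    intro c
    have e : z * c * z⁻¹ = c := by rw [← hz' c]; group
    calc ⁅a * z, c⁆ = a * (z * c * z⁻¹) * a⁻¹ * c⁻¹ := by
          rw [commutatorElement_def]; group
      _ = ⁅a, c⁆ := by rw [e, commutatorElement_def]
  have h2 : ⁅a, b * w⁆ = ⁅a, b⁆ := by
    have e : w * a⁻¹ * w⁻¹ = a⁻¹ := by rw [← hw' a⁻¹]; group
    calc ⁅a, b * w⁆ = a * b * (w * a⁻¹ * w⁻¹) * b⁻¹ := by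
          rw [commutatorElement_def]; group
      _ = ⁅a, b⁆ := by rw [e, commutatorElement_def]
  rw [h1, h2]

lemma finite_commutatorSet_of_finite_quotient_center' (M : Type*) [Group M]
    [Finite (M ⧸ Subgroup.center M)] : Finite (commutatorSet M) := by
  classical
  set σ : (M ⧸ Subgroup.center M) → M := Function.surjInv (QuotientGroup.mk_surjective) with hσ
  have hσ' : ∀ q, (QuotientGroup.mk (σ q) : M ⧸ Subgroup.center M) = q :=
    Function.surjInv_eq _
  have hsub : commutatorSet M ⊆
      Set.range (fun p : (M ⧸ Subgroup.center M) × (M ⧸ Subgroup.center M) => ⁅σ p.1, σ p.2⁆) := by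
    rintro x ⟨g, k, rfl⟩
    refine ⟨(QuotientGroup.mk g, QuotientGroup.mk k), ?_⟩
    have hg : g⁻¹ * σ (QuotientGroup.mk g) ∈ Subgroup.center M := by
      rw [← QuotientGroup.eq]; exact (hσ' _).symm
    have hk : k⁻¹ * σ (QuotientGroup.mk k) ∈ Subgroup.center M := by
      rw [← QuotientGroup.eq]; exact (hσ' _).symm
    have eg : σ (QuotientGroup.mk g) = g * (g⁻¹ * σ (QuotientGroup.mk g)) := by group
    have ek : σ (QuotientGroup.mk k) = k * (k⁻¹ * σ (QuotientGroup.mk k)) := by group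
    show ⁅σ (QuotientGroup.mk g), σ (QuotientGroup.mk k)⁆ = ⁅g, k⁆
    conv_lhs => rw [eg, ek]
    exact commutator_congr_center' _ _ _ _ hg hk
  exact (Set.Finite.subset (Set.finite_range _) hsub).to_subtype

lemma finite_quotient_center_closure' {G : Type*} [Group G]
    (h : LocallyFiniteGroup (G ⧸ Subgroup.center G)) (U : Finset G) :
    Finite (↥(Subgroup.closure (U : Set G)) ⧸
      Subgroup.center ↥(Subgroup.closure (U : Set G))) := by
  classical
  set H := Subgroup.closure (U : Set G)
  set φ : ↥H →* G ⧸ Subgroup.center G :=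
    (QuotientGroup.mk' (Subgroup.center G)).comp H.subtype with hφ
  have hrange : φ.range = Subgroup.closure
      ((U.image (QuotientGroup.mk' (Subgroup.center G)) : Finset _) : Set (G ⧸ Subgroup.center G)) := by
    rw [hφ, MonoidHom.range_comp, Subgroup.range_subtype, Finset.coe_image,
      ← MonoidHom.map_closure]
  haveI : Finite φ.range := by rw [hrange]; exact h _
  haveI : Finite (↥H ⧸ φ.ker) :=
    Finite.of_equiv _ (QuotientGroup.quotientKerEquivRange φ).symm.toEquiv
  have hker : φ.ker ≤ Subgroup.center ↥H := by
    intro x hx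
    rw [Subgroup.mem_center_iff]
    intro y
    have hxc : (x : G) ∈ Subgroup.center G := by
      rw [MonoidHom.mem_ker, hφ, MonoidHom.comp_apply, QuotientGroup.mk'_apply,
        QuotientGroup.eq_one_iff] at hx
      exact hx
    ext
    exact Subgroup.mem_center_iff.mp hxc y
  exact Finite.of_surjective
    (QuotientGroup.map φ.ker (Subgroup.center ↥H) (MonoidHom.id _) hker)
    (fun q => by
      obtain ⟨x, rfl⟩ := QuotientGroup.mk_surjective q
      exact ⟨QuotientGroup.mk x, rfl⟩)

theorem stmt0 (G : Type*) [Group G]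
    (h : LocallyFiniteGroup (G ⧸ Subgroup.center G)) :
    LocallyFiniteGroup (commutator G) := by
  classical
  intro s
  -- Step 1: each element of `s` lies in the commutator of a finitely generated subgroup
  have key : ∀ x : commutator G, ∃ T : Finset G,
      (x : G) ∈ ⁅Subgroup.closure (T : Set G), Subgroup.closure (T : Set G)⁆ := by
    intro x
    have hx : (x : G) ∈ Subgroup.closure (commutatorSet G) := by
      rw [← commutator_eq_closure]; exact x.2
    have hdir : Directed (· ≤ ·) (fun T : Finset G =>
        ⁅Subgroup.closure (T : Set G), Subgroup.closure (T : Set G)⁆) := by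
      intro T T'
      refine ⟨T ∪ T', ?_, ?_⟩ <;>
        exact Subgroup.commutator_mono
          (Subgroup.closure_mono (by simp [Finset.coe_subset, Finset.subset_union_left,
            Finset.subset_union_right]))
          (Subgroup.closure_mono (by simp [Finset.coe_subset, Finset.subset_union_left,
            Finset.subset_union_right]))
    have : (x : G) ∈ ⨆ T : Finset G,
        ⁅Subgroup.closure (T : Set G), Subgroup.closure (T : Set G)⁆ := by
      refine (Subgroup.closure_le _).mpr ?_ hx
      rintro y ⟨g, k, rfl⟩
      refine Subgroup.mem_iSup_of_mem ({g, k} : Finset G) ?_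
      exact Subgroup.commutator_mem_commutator
        (Subgroup.subset_closure (by simp)) (Subgroup.subset_closure (by simp))
    rwa [Subgroup.mem_iSup_of_directed hdir] at this
  choose T hT using fun x : {x : ↥(commutator G) // x ∈ s} => key x.1
  set U : Finset G := s.attach.biUnion (fun x => T x) with hU
  set H := Subgroup.closure (U : Set G) with hH
  set K := ⁅H, H⁆ with hK
  have hsK : ∀ x : ↥(commutator G), x ∈ s → (x : G) ∈ K := by
    intro x hx
    have hsub : (T ⟨x, hx⟩ : Set G) ⊆ (U : Set G) := by
      exact_mod_cast Finset.coe_subset.mpr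
        (Finset.subset_biUnion_of_mem _ (Finset.mem_attach s ⟨x, hx⟩))
    exact Subgroup.commutator_mono (Subgroup.closure_mono hsub)
      (Subgroup.closure_mono hsub) (hT ⟨x, hx⟩)
  -- Step 2: `K` is finite by Schur's theorem
  haveI : Finite (↥H ⧸ Subgroup.center ↥H) := finite_quotient_center_closure' h U
  haveI : Finite (commutatorSet ↥H) := finite_commutatorSet_of_finite_quotient_center' ↥H
  haveI : Finite (_root_.commutator ↥H) := inferInstance
  have hmap : Subgroup.map H.subtype (_root_.commutator ↥H) = K := by
    rw [commutator_def, Subgroup.map_commutator, ← MonoidHom.range_eq_map,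
      Subgroup.range_subtype]
  haveI : Finite K := by
    rw [← hmap]
    exact Finite.of_equiv _
      (Subgroup.equivMapOfInjective _ _ (Subgroup.subtype_injective H)).toEquiv
  -- Step 3: conclude
  have hle : Subgroup.closure (s : Set ↥(commutator G)) ≤
      K.subgroupOf (commutator G) := by
    refine (Subgroup.closure_le _).mpr ?_
    intro x hx
    rw [SetLike.mem_coe, Subgroup.mem_subgroupOf]
    exact hsK x hx
  haveI : Finite (K.subgroupOf (commutator G)) := by
    refine Finite.of_injective
      (fun x : ↥(K.subgroupOf (commutator G)) =>
        (⟨((x : ↥(commutator G)) : G), x.2⟩ : ↥K)) ?_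
    intro x y hxy
    simp only [Subtype.mk.injEq] at hxy
    exact Subtype.ext (Subtype.ext (congrArg (fun z : ↥K => (z : G)) hxy))
  exact Finite.of_injective (Subgroup.inclusion hle) (Subgroup.inclusion_injective hle)
end

section
/- Every locally solvable periodic group is locally finite. -/
private lemma map_derivedSeries_commutator_le {G : Type*} [Group G] (n : ℕ) :
    (derivedSeries (commutator G) n).map (commutator G).subtype ≤ derivedSeries G (n + 1) := by
  induction n with
  | zero =>
      rw [derivedSeries_zero, ← MonoidHom.range_eq_map, Subgroup.range_subtype,
        derivedSeries_one]
  | succ n ih =>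
      rw [derivedSeries_succ, Subgroup.map_commutator, derivedSeries_succ]
      exact Subgroup.commutator_mono ih ih

private lemma finite_of_fg_torsion_solvable :
    ∀ (n : ℕ) (G : Type*) [Group G], Group.FG G → Monoid.IsTorsion G →
      derivedSeries G n = ⊥ → Finite G := by
  intro n
  induction n with
  | zero =>
      intro G _ _ _ hbot
      rw [derivedSeries_zero] at hbot
      have : Subsingleton G := by
        constructor
        intro a b
        have ha : a ∈ (⊥ : Subgroup G) := hbot ▸ Subgroup.mem_top a
        have hb : b ∈ (⊥ : Subgroup G) := hbot ▸ Subgroup.mem_top b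
        rw [Subgroup.mem_bot] at ha hb
        rw [ha, hb]
      exact Finite.of_subsingleton
  | succ n ih =>
      intro G _ hfg htors hbot
      haveI : Group.FG G := hfg
      -- the abelianization is finite
      haveI : Group.FG (Abelianization G) := QuotientGroup.fg (commutator G)
      haveI : Finite (Abelianization G) := by
        refine CommGroup.finite_of_fg_torsion _ ?_
        intro g
        refine QuotientGroup.induction_on g fun x => ?_
        exact (Abelianization.of (G := G)).isOfFinOrder (htors x)
      -- hence the commutator subgroup has finite index and is f.g.
      have hindex : (commutator G).index ≠ 0 := by
        have : (commutator G).index = Nat.card (Abelianization G) := rfl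
        rw [this]
        exact Nat.card_ne_zero.mpr ⟨⟨Abelianization.of 1⟩, inferInstance⟩
      haveI : (commutator G).FiniteIndex := ⟨hindex⟩
      have hHfg : Group.FG (commutator G) := Subgroup.fg_of_index_ne_zero _
      have hHtors : Monoid.IsTorsion (commutator G) :=
        IsTorsion.subgroup htors (commutator G)
      have hHbot : derivedSeries (commutator G) n = ⊥ := by
        have h1 : (derivedSeries (commutator G) n).map (commutator G).subtype ≤ ⊥ := by
          rw [← hbot]; exact map_derivedSeries_commutator_le n
        rw [le_bot_iff, Subgroup.map_eq_bot_iff_of_injective _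
          (commutator G).subtype_injective] at h1
        exact h1
      haveI : Finite (commutator G) := ih _ hHfg hHtors hHbot
      haveI : Finite (G ⧸ commutator G) := Nat.finite_of_card_ne_zero hindex
      exact Finite.of_equiv _ (Subgroup.groupEquivQuotientProdSubgroup (s := commutator G)).symm

theorem stmt1 (G : Type*) [Group G] (hsol : LocallySolvableGroup G)
    (hper : ∀ g : G, IsOfFinOrder g) :
    LocallyFiniteGroup G := by
  intro s
  have hfg : Group.FG (Subgroup.closure (s : Set G)) :=
    (Group.fg_iff_subgroup_fg _).mpr ⟨s, rfl⟩
  have htors : Monoid.IsTorsion (Subgroup.closure (s : Set G)) :=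
    IsTorsion.subgroup hper _
  obtain ⟨n, hn⟩ := (hsol s).solvable
  exact finite_of_fg_torsion_solvable n _ hfg htors hn
end

section
/- Let D be a division ring with center F, and let G be a locally finite subgroup of the multiplicative group D*. Then the subring F[G] of D generated by F and G equals the division subring F(G) generated by F and G; that is, F[G] is a division ring. -/
theorem key (D : Type*) [DivisionRing D] (G : Subgroup Dˣ) (hG : LocallyFiniteGroup G)
    {x : D} (hx : x ∈ Algebra.adjoin (Subring.center D) (Units.val '' (G : Set Dˣ))) :
    x⁻¹ ∈ Algebra.adjoin (Subring.center D) (Units.val '' (G : Set Dˣ)) := by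
  classical
  set F := Subring.center D with hF
  set S : Finset G → Subalgebra F D := fun u =>
    Algebra.adjoin F (Units.val '' (Subtype.val '' ((Subgroup.closure (u : Set G) : Subgroup G) : Set G))) with hS
  have hmono : Monotone S := by
    intro u v huv
    exact Algebra.adjoin_mono (Set.image_mono (Set.image_mono
      (Subgroup.closure_mono (by exact_mod_cast huv))))
  have hdir : Directed (· ≤ ·) S := hmono.directed_le
  have hle : Algebra.adjoin F (Units.val '' (G : Set Dˣ)) ≤ ⨆ u, S u := by
    rw [Algebra.adjoin_le_iff]
    rintro d ⟨g, hg, rfl⟩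
    refine (le_iSup S {(⟨g, hg⟩ : G)}) ?_
    apply Algebra.subset_adjoin
    exact ⟨g, ⟨⟨g, hg⟩, Subgroup.subset_closure (by simp), rfl⟩, rfl⟩
  have hx2 : x ∈ ⨆ u, S u := hle hx
  rw [← SetLike.mem_coe, Subalgebra.coe_iSup_of_directed hdir, Set.mem_iUnion] at hx2
  obtain ⟨u, hxu⟩ := hx2
  -- the finite subgroup
  haveI : Finite (Subgroup.closure (u : Set G)) := hG u
  set H := Subgroup.closure (u : Set G) with hH
  set M : Submonoid D := Submonoid.map ((Units.coeHom D).comp G.subtype) H.toSubmonoid with hM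
  have hMset : (M : Set D) = Units.val '' (Subtype.val '' (H : Set G)) := by
    ext d
    simp [hM, Set.mem_image]
  have hfin : (M : Set D).Finite := by
    rw [hMset]
    exact ((Set.toFinite (H : Set G)).image _).image _
  have hspan : Subalgebra.toSubmodule (S u) = Submodule.span F (M : Set D) := by
    rw [hS]
    simp only
    rw [show (Units.val '' (Subtype.val '' ((Subgroup.closure (u : Set G) : Subgroup G) : Set G))) = (M : Set D) from hMset.symm]
    rw [Algebra.adjoin_eq_span, Submonoid.closure_eq]
  haveI : Module.Finite F (S u) := by
    have h1 : Module.Finite F (Submodule.span F (M : Set D)) :=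
      Module.Finite.span_of_finite F hfin
    exact Module.Finite.equiv (LinearEquiv.ofEq _ _ hspan.symm)
  have int : IsIntegral F x := by
    have h1 : IsIntegral F (⟨x, hxu⟩ : S u) := Algebra.IsIntegral.isIntegral _
    exact h1.map (S u).val
  exact int.inv_mem hx

theorem stmt3 (D : Type*) [DivisionRing D] (G : Subgroup Dˣ)
    (hG : LocallyFiniteGroup G) :
    Subring.closure ((Subring.center D : Set D) ∪ Units.val '' (G : Set Dˣ)) =
      (Subfield.closure ((Subring.center D : Set D) ∪ Units.val '' (G : Set Dˣ))).toSubring := by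
  have hrange : Set.range (algebraMap (Subring.center D) D) = (Subring.center D : Set D) :=
    Subtype.range_val
  have hclos : Subring.closure ((Subring.center D : Set D) ∪ Units.val '' (G : Set Dˣ)) =
      (Algebra.adjoin (Subring.center D) (Units.val '' (G : Set Dˣ))).toSubring := by
    rw [Algebra.adjoin_eq_ring_closure, hrange]
  have hinv : ∀ x ∈ Subring.closure ((Subring.center D : Set D) ∪ Units.val '' (G : Set Dˣ)),
      x⁻¹ ∈ Subring.closure ((Subring.center D : Set D) ∪ Units.val '' (G : Set Dˣ)) := by
    intro x hx
    rw [hclos] at hx ⊢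
    exact key D G hG hx
  refine le_antisymm (Subring.closure_le.2 Subfield.subset_closure) ?_
  have h2 : Subfield.closure ((Subring.center D : Set D) ∪ Units.val '' (G : Set Dˣ)) ≤
      { Subring.closure ((Subring.center D : Set D) ∪ Units.val '' (G : Set Dˣ)) with
        inv_mem' := hinv } :=
    Subfield.closure_le.2 Subring.subset_closure
  exact fun x hx => h2 hx
end

section
/- Let D be a division ring with center F, and let G be a locally finite subgroup of D* with F(G) = D. Then D is locally finite over F, i.e., every finitely generated division subring of D containing F is finite-dimensional over F. -/
open Pointwise

section Aux
variable {D : Type*} [DivisionRing D]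

private theorem aux_mul_mem (H : Subgroup Dˣ) {a b : D}
    (ha : a ∈ Submodule.span (Subring.center D) (Units.val '' (H : Set Dˣ)))
    (hb : b ∈ Submodule.span (Subring.center D) (Units.val '' (H : Set Dˣ))) :
    a * b ∈ Submodule.span (Subring.center D) (Units.val '' (H : Set Dˣ)) := by
  have hss : (Units.val '' (H : Set Dˣ)) * (Units.val '' (H : Set Dˣ)) ⊆
      Units.val '' (H : Set Dˣ) := by
    rw [Set.mul_subset_iff]
    rintro _ ⟨u, hu, rfl⟩ _ ⟨v, hv, rfl⟩
    exact ⟨u * v, mul_mem hu hv, rfl⟩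
  have h := Submodule.mul_mem_mul ha hb
  rw [Submodule.span_mul_span] at h
  exact Submodule.span_mono hss h

private theorem aux_one_mem (H : Subgroup Dˣ) :
    (1 : D) ∈ Submodule.span (Subring.center D) (Units.val '' (H : Set Dˣ)) :=
  Submodule.subset_span ⟨1, H.one_mem, rfl⟩

private theorem aux_inv_mem (H : Subgroup Dˣ)
    (hfin : (Units.val '' (H : Set Dˣ)).Finite) {a : D}
    (ha : a ∈ Submodule.span (Subring.center D) (Units.val '' (H : Set Dˣ))) :
    a⁻¹ ∈ Submodule.span (Subring.center D) (Units.val '' (H : Set Dˣ)) := by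
  rcases eq_or_ne a 0 with rfl | h0
  · simpa using Submodule.zero_mem _
  set F := Subring.center D
  set M := Submodule.span F (Units.val '' (H : Set Dˣ)) with hM
  haveI : FiniteDimensional F M := FiniteDimensional.span_of_finite _ hfin
  let f : M →ₗ[F] M :=
    { toFun := fun m => ⟨a * m, aux_mul_mem H ha m.2⟩
      map_add' := by intro x y; ext; simp [mul_add]
      map_smul' := by
        intro c x
        ext
        show a * ((c : D) * x) = (c : D) * (a * (x : D))
        rw [← mul_assoc, Subring.mem_center_iff.mp c.2 a, mul_assoc]
      }
  have hinj : Function.Injective f := by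
    intro x y hxy
    have : a * (x : D) = a * (y : D) := congrArg Subtype.val hxy
    exact Subtype.ext (mul_left_cancel₀ h0 this)
  obtain ⟨m, hm⟩ := LinearMap.injective_iff_surjective.mp hinj ⟨1, aux_one_mem H⟩
  have hm' : a * (m : D) = 1 := congrArg Subtype.val hm
  rw [inv_eq_of_mul_eq_one_right hm']
  exact m.2

private noncomputable def auxField (H : Subgroup Dˣ)
    (hfin : (Units.val '' (H : Set Dˣ)).Finite) : Subfield D where
  carrier := Submodule.span (Subring.center D) (Units.val '' (H : Set Dˣ))
  mul_mem' := aux_mul_mem H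
  one_mem' := aux_one_mem H
  add_mem' := fun h1 h2 => Submodule.add_mem _ h1 h2
  zero_mem' := Submodule.zero_mem _
  neg_mem' := fun h => Submodule.neg_mem _ h
  inv_mem' := fun a h => aux_inv_mem H hfin h

private theorem auxField_center (H : Subgroup Dˣ)
    (hfin : (Units.val '' (H : Set Dˣ)).Finite) {c : D} (hc : c ∈ Subring.center D) :
    c ∈ auxField H hfin := by
  have := Submodule.smul_mem (Submodule.span (Subring.center D) (Units.val '' (H : Set Dˣ)))
    (⟨c, hc⟩ : Subring.center D) (aux_one_mem H)
  have h1 : (⟨c, hc⟩ : Subring.center D) • (1 : D) = c := by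
    show c * 1 = c; rw [mul_one]
  rw [h1] at this
  exact this

private theorem auxField_mono {H K : Subgroup Dˣ} (h : H ≤ K)
    (hH : (Units.val '' (H : Set Dˣ)).Finite) (hK : (Units.val '' (K : Set Dˣ)).Finite) :
    auxField H hH ≤ auxField K hK :=
  Submodule.span_mono (Set.image_mono h)

end Aux

theorem stmt4 (D : Type*) [DivisionRing D] (G : Subgroup Dˣ)
    (hG : LocallyFiniteGroup G)
    (hgen : Subfield.closure ((Subring.center D : Set D) ∪ Units.val '' (G : Set Dˣ)) = ⊤) :
    ∀ s : Finset D, ∃ t : Finset D,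
      ∀ x ∈ Subfield.closure ((Subring.center D : Set D) ∪ (s : Set D)),
        x ∈ Submodule.span (Subring.center D) (t : Set D) := by
  classical
  intro s
  -- the family of finite subgroups of Dˣ coming from finite subsets of G
  let HF : Finset G → Subgroup Dˣ := fun u => (Subgroup.closure (u : Set G)).map G.subtype
  have hfinH : ∀ u : Finset G, (Units.val '' ((HF u) : Set Dˣ)).Finite := fun u => by
    haveI := hG u
    have h1 : ((HF u) : Set Dˣ).Finite := by
      rw [Subgroup.coe_map]
      exact Set.Finite.image _ (Set.toFinite _)
    exact h1.image _
  have hmono : ∀ {u v : Finset G}, u ⊆ v → auxField (HF u) (hfinH u) ≤ auxField (HF v) (hfinH v) := by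
    intro u v huv
    exact auxField_mono (Subgroup.map_mono (Subgroup.closure_mono (by exact_mod_cast huv))) _ _
  -- the union of all these subfields
  let U : Subfield D :=
    { carrier := ⋃ u : Finset G, (auxField (HF u) (hfinH u) : Set D)
      one_mem' := Set.mem_iUnion.mpr ⟨∅, Subfield.one_mem _⟩
      zero_mem' := Set.mem_iUnion.mpr ⟨∅, Subfield.zero_mem _⟩
      mul_mem' := by
        rintro a b ha hb
        obtain ⟨u, hu⟩ := Set.mem_iUnion.mp ha
        obtain ⟨v, hv⟩ := Set.mem_iUnion.mp hb
        exact Set.mem_iUnion.mpr ⟨u ∪ v,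
          Subfield.mul_mem _ (hmono Finset.subset_union_left hu)
            (hmono Finset.subset_union_right hv)⟩
      add_mem' := by
        rintro a b ha hb
        obtain ⟨u, hu⟩ := Set.mem_iUnion.mp ha
        obtain ⟨v, hv⟩ := Set.mem_iUnion.mp hb
        exact Set.mem_iUnion.mpr ⟨u ∪ v,
          Subfield.add_mem _ (hmono Finset.subset_union_left hu)
            (hmono Finset.subset_union_right hv)⟩
      neg_mem' := by
        rintro a ha
        obtain ⟨u, hu⟩ := Set.mem_iUnion.mp ha
        exact Set.mem_iUnion.mpr ⟨u, Subfield.neg_mem _ hu⟩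
      inv_mem' := by
        rintro a ha
        obtain ⟨u, hu⟩ := Set.mem_iUnion.mp ha
        exact Set.mem_iUnion.mpr ⟨u, Subfield.inv_mem _ hu⟩ }
  have hUtop : U = ⊤ := by
    rw [← top_le_iff, ← hgen]
    apply Subfield.closure_le.mpr
    rintro x (hx | ⟨g, hg, rfl⟩)
    · exact Set.mem_iUnion.mpr ⟨∅, auxField_center _ _ hx⟩
    · refine Set.mem_iUnion.mpr ⟨{⟨g, hg⟩}, Submodule.subset_span ⟨g, ?_, rfl⟩⟩
      exact ⟨⟨g, hg⟩, Subgroup.subset_closure (by simp), rfl⟩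
  -- choose a finite subset of G for each element of s
  have hmem : ∀ x : {x // x ∈ s}, ∃ u : Finset G, (x : D) ∈ auxField (HF u) (hfinH u) := by
    intro x
    have : (x : D) ∈ U := hUtop ▸ Subfield.mem_top _
    exact Set.mem_iUnion.mp this
  choose uf huf using hmem
  set u : Finset G := s.attach.biUnion uf with hu
  have hsub : (s : Set D) ⊆ (auxField (HF u) (hfinH u) : Set D) := by
    intro x hx
    exact hmono (Finset.subset_biUnion_of_mem uf (Finset.mem_attach s ⟨x, hx⟩)) (huf ⟨x, hx⟩)
  refine ⟨(hfinH u).toFinset, fun x hx => ?_⟩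
  have hle : Subfield.closure ((Subring.center D : Set D) ∪ (s : Set D)) ≤
      auxField (HF u) (hfinH u) := by
    apply Subfield.closure_le.mpr
    rintro y (hy | hy)
    · exact auxField_center _ _ hy
    · exact hsub hy
  have := hle hx
  rwa [Set.Finite.coe_toFinset]
end

section
/- Let D be a division ring with center F and suppose F is finite. If G is a finite subgroup of D*, then G is contained in F (equivalently, G is cyclic and central). In particular, every finite subnormal subgroup of D* is central. -/
/-- In a division ring of nonzero characteristic, the elements of a finite
multiplicatively closed set containing `1` pairwise commute. -/
lemma fin_mulclosed_comm {D : Type*} [DivisionRing D] {q : ℕ} (hq : CharP D q) (hq0 : q ≠ 0)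
    (S : Set D) (hS : S.Finite) (h1 : (1:D) ∈ S)
    (hmul : ∀ a ∈ S, ∀ b ∈ S, a * b ∈ S) :
    ∀ a ∈ S, ∀ b ∈ S, a * b = b * a := by
  obtain ⟨k, rfl⟩ := Nat.exists_eq_succ_of_ne_zero hq0
  have hsmul : ∀ x : D, (k+1) • x = 0 := by
    intro x
    rw [nsmul_eq_mul, CharP.cast_eq_zero D, zero_mul]
  letI : Module (ZMod (k+1)) D := AddCommMonoid.zmodModule hsmul
  have hzsmul : ∀ (r : ZMod (k+1)) (y : D), r • y = r.val • y := fun r y => rfl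
  set R : Submodule (ZMod (k+1)) D := Submodule.span (ZMod (k+1)) S with hR
  -- left multiplication commutes with natural smul
  have hnsc : ∀ (m : ℕ) (x y : D), x * (m • y) = m • (x * y) := by
    intro m x y
    rw [nsmul_eq_mul, nsmul_eq_mul, ← mul_assoc, ← (Nat.cast_commute m x).eq, mul_assoc]
  have hnsc' : ∀ (m : ℕ) (x y : D), (m • x) * y = m • (x * y) := by
    intro m x y
    rw [nsmul_eq_mul, nsmul_eq_mul, mul_assoc]
  -- multiplicative closure of the span
  have hmulR : ∀ x ∈ R, ∀ y ∈ R, x * y ∈ R := by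
    have hL : ∀ a ∈ S, ∀ y ∈ R, a * y ∈ R := by
      intro a ha y hy
      induction hy using Submodule.span_induction with
      | mem z hz => exact Submodule.subset_span (hmul a ha z hz)
      | zero => simpa using R.zero_mem
      | add x y hx hy hx' hy' => rw [mul_add]; exact R.add_mem hx' hy'
      | smul r x hx hx' =>
        rw [hzsmul, hnsc, ← hzsmul]
        exact R.smul_mem r hx'
    intro x hx y hy
    induction hx using Submodule.span_induction with
    | mem z hz => exact hL z hz y hy
    | zero => simpa using R.zero_mem
    | add u v hu hv hu' hv' => rw [add_mul]; exact R.add_mem hu' hv'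
    | smul r u hu hu' =>
      rw [hzsmul, hnsc', ← hzsmul]
      exact R.smul_mem r hu'
  -- the span is a subring
  let SR : Subring D :=
    { carrier := (R : Set D)
      zero_mem' := R.zero_mem
      one_mem' := Submodule.subset_span h1
      add_mem' := fun ha hb => R.add_mem ha hb
      neg_mem' := fun ha => R.neg_mem ha
      mul_mem' := fun {a b} ha hb => hmulR a ha b hb }
  haveI : Module.Finite (ZMod (k+1)) R := Module.Finite.span_of_finite _ hS
  haveI hfinR : Finite R := Module.finite_of_finite (ZMod (k+1))
  haveI : Finite SR := by
    refine Finite.of_injective (fun x : SR => (⟨x.1, x.2⟩ : R)) ?_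
    intro x y hxy
    exact Subtype.ext (congrArg Subtype.val hxy)
  have hfield : IsField SR := Finite.isDomain_to_isField SR
  intro a ha b hb
  have h := hfield.mul_comm ⟨a, Submodule.subset_span ha⟩ ⟨b, Submodule.subset_span hb⟩
  exact congrArg Subtype.val h

/-- Units version of `fin_mulclosed_comm`. -/
lemma units_fin_mulclosed_comm {D : Type*} [DivisionRing D] {q : ℕ} (hq : CharP D q)
    (hq0 : q ≠ 0) (M : Set Dˣ) (hM : M.Finite) (h1 : (1:Dˣ) ∈ M)
    (hmul : ∀ a ∈ M, ∀ b ∈ M, a * b ∈ M) :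
    ∀ a ∈ M, ∀ b ∈ M, a * b = b * a := by
  have key := fin_mulclosed_comm hq hq0 ((fun u : Dˣ => (u : D)) '' M) (hM.image _)
    ⟨1, h1, rfl⟩ ?_
  · intro a ha b hb
    have := key _ ⟨a, ha, rfl⟩ _ ⟨b, hb, rfl⟩
    ext
    simpa using this
  · rintro _ ⟨u, hu, rfl⟩ _ ⟨v, hv, rfl⟩
    exact ⟨u * v, hmul u hu v hv, by simp⟩

/-- If `t * s = s * t * d` with `d` commuting with `s` and `t`, and all three have
order dividing `e ≠ 0`, then `s` and `t` commute. -/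
lemma commute_of_braided {D : Type*} [DivisionRing D] {q : ℕ} (hq : CharP D q) (hq0 : q ≠ 0)
    {e : ℕ} (he : e ≠ 0) (s t d : Dˣ)
    (hrel : t * s = s * t * d)
    (hds : Commute s d) (hdt : Commute t d)
    (hse : s ^ e = 1) (hte : t ^ e = 1) (hde : d ^ e = 1) :
    s * t = t * s := by
  have hc_ds : ∀ m n : ℕ, d ^ m * s ^ n = s ^ n * d ^ m :=
    fun m n => (hds.symm.pow_pow m n).eq
  have hc_dt : ∀ m n : ℕ, d ^ m * t ^ n = t ^ n * d ^ m :=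
    fun m n => (hdt.symm.pow_pow m n).eq
  have k1 : ∀ i : ℕ, t * s ^ i = s ^ i * t * d ^ i := by
    intro i
    induction i with
    | zero => simp
    | succ i ih =>
      calc t * s ^ (i+1) = (t * s ^ i) * s := by rw [pow_succ, ← mul_assoc]
        _ = s ^ i * t * d ^ i * s := by rw [ih]
        _ = s ^ i * t * (d ^ i * s ^ 1) := by rw [pow_one, mul_assoc]
        _ = s ^ i * t * (s ^ 1 * d ^ i) := by rw [hc_ds]
        _ = s ^ i * (t * s) * d ^ i := by rw [pow_one]; group
        _ = s ^ i * (s * t * d) * d ^ i := by rw [hrel]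
        _ = s ^ (i+1) * t * d ^ (i+1) := by rw [pow_succ s, pow_succ' d]; group
  have key : ∀ j i : ℕ, t ^ j * s ^ i = s ^ i * t ^ j * d ^ (i * j) := by
    intro j
    induction j with
    | zero => simp
    | succ j ih =>
      intro i
      calc t ^ (j+1) * s ^ i = t * (t ^ j * s ^ i) := by rw [pow_succ', mul_assoc]
        _ = t * (s ^ i * t ^ j * d ^ (i*j)) := by rw [ih]
        _ = (t * s ^ i) * (t ^ j * d ^ (i*j)) := by group
        _ = (s ^ i * t * d ^ i) * (t ^ j * d ^ (i*j)) := by rw [k1]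
        _ = (s ^ i * t) * ((d ^ i * t ^ j) * d ^ (i*j)) := by group
        _ = (s ^ i * t) * ((t ^ j * d ^ i) * d ^ (i*j)) := by rw [hc_dt]
        _ = (s ^ i * (t * t ^ j)) * (d ^ i * d ^ (i*j)) := by group
        _ = s ^ i * t ^ (j+1) * d ^ (i * (j+1)) := by
              rw [← pow_succ', ← pow_add, Nat.mul_succ, Nat.add_comm (i*j) i]
  set M : Set Dˣ := {u | ∃ i j k : ℕ, u = s ^ i * t ^ j * d ^ k} with hMdef
  have hmul : ∀ a ∈ M, ∀ b ∈ M, a * b ∈ M := by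
    rintro _ ⟨i, j, k, rfl⟩ _ ⟨i', j', k', rfl⟩
    refine ⟨i + i', j + j', i' * j + (k + k'), ?_⟩
    calc s ^ i * t ^ j * d ^ k * (s ^ i' * t ^ j' * d ^ k')
        = (s ^ i * t ^ j) * ((d ^ k * s ^ i') * (t ^ j' * d ^ k')) := by group
      _ = (s ^ i * t ^ j) * ((s ^ i' * d ^ k) * (t ^ j' * d ^ k')) := by rw [hc_ds]
      _ = (s ^ i * (t ^ j * s ^ i')) * ((d ^ k * t ^ j') * d ^ k') := by group
      _ = (s ^ i * (s ^ i' * t ^ j * d ^ (i'*j))) * ((t ^ j' * d ^ k) * d ^ k') := by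
            rw [key, hc_dt]
      _ = (s ^ i * s ^ i') * (t ^ j * (d ^ (i'*j) * t ^ j')) * (d ^ k * d ^ k') := by group
      _ = (s ^ i * s ^ i') * (t ^ j * (t ^ j' * d ^ (i'*j))) * (d ^ k * d ^ k') := by
            rw [hc_dt]
      _ = (s ^ i * s ^ i') * (t ^ j * t ^ j') * (d ^ (i'*j) * (d ^ k * d ^ k')) := by group
      _ = s ^ (i+i') * t ^ (j+j') * d ^ (i'*j + (k + k')) := by
            rw [← pow_add, ← pow_add, ← pow_add, ← pow_add]
  have hpowmod : ∀ (u : Dˣ), u ^ e = 1 → ∀ i : ℕ, u ^ i = u ^ (i % e) := by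
    intro u hu i
    conv_lhs => rw [← Nat.div_add_mod i e]
    rw [pow_add, pow_mul, hu, one_pow, one_mul]
  have hMfin : M.Finite := by
    have hsub : M ⊆ (fun v : Fin e × Fin e × Fin e =>
        s ^ (v.1 : ℕ) * t ^ (v.2.1 : ℕ) * d ^ (v.2.2 : ℕ)) '' Set.univ := by
      rintro _ ⟨i, j, k, rfl⟩
      have hepos : 0 < e := Nat.pos_of_ne_zero he
      refine ⟨⟨⟨i % e, Nat.mod_lt _ hepos⟩, ⟨j % e, Nat.mod_lt _ hepos⟩,
        ⟨k % e, Nat.mod_lt _ hepos⟩⟩, trivial, ?_⟩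
      simp only
      rw [← hpowmod s hse, ← hpowmod t hte, ← hpowmod d hde]
    exact Set.Finite.subset (Set.finite_univ.image _) hsub
  have h1 : (1:Dˣ) ∈ M := ⟨0, 0, 0, by simp⟩
  have := units_fin_mulclosed_comm hq hq0 M hMfin h1 hmul
  have hs : s ∈ M := ⟨1, 0, 0, by simp⟩
  have ht : t ∈ M := ⟨0, 1, 0, by simp⟩
  exact this s hs t ht


/-- An abelian subgroup of `Dˣ` stable under all conjugations is central (Hua-style argument). -/
lemma abelian_normal_central {D : Type*} [DivisionRing D] (N : Subgroup Dˣ)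
    (hconj : ∀ (x : Dˣ), ∀ g ∈ N, x * g * x⁻¹ ∈ N)
    (hcomm : ∀ a ∈ N, ∀ b ∈ N, a * b = b * a) :
    ∀ a ∈ N, (a : D) ∈ Subring.center D := by
  intro a ha
  rw [Subring.mem_center_iff]
  intro x
  rcases eq_or_ne x 0 with rfl | hx
  · simp
  rcases eq_or_ne (1 + x) 0 with h1 | h1
  · have hx1 : x = -1 := by
      have := neg_eq_of_add_eq_zero_right h1
      exact this.symm
    subst hx1
    simp
  · set xu := Units.mk0 x hx with hxu
    set u1 := Units.mk0 (1+x) h1 with hu1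
    set y := xu * a * xu⁻¹ with hy
    set z := u1 * a * u1⁻¹ with hz
    have hyN : y ∈ N := hconj xu a ha
    have hzN : z ∈ N := hconj u1 a ha
    have cay : Commute (a : D) (y : D) := by
      have h := hcomm a ha y hyN
      have h2 : ((a * y : Dˣ) : D) = ((y * a : Dˣ) : D) := congrArg Units.val h
      rw [Units.val_mul, Units.val_mul] at h2
      exact h2
    have caz : Commute (a : D) (z : D) := by
      have h := hcomm a ha z hzN
      have h2 : ((a * z : Dˣ) : D) = ((z * a : Dˣ) : D) := congrArg Units.val h
      rw [Units.val_mul, Units.val_mul] at h2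
      exact h2
    have hyval : (y : D) = x * (a : D) * x⁻¹ := by
      rw [hy]
      simp [hxu]
    have hzval : (z : D) = (1+x) * (a : D) * (1+x)⁻¹ := by
      rw [hz]
      simp [hu1]
    have hyx : (y : D) * x = x * (a : D) := by
      rw [hyval, mul_assoc, inv_mul_cancel₀ hx, mul_one]
    have hzx : (z : D) * (1 + x) = (1 + x) * (a : D) := by
      rw [hzval, mul_assoc, inv_mul_cancel₀ h1, mul_one]
    have h2 : (z : D) + (z : D) * x = (a : D) + (y : D) * x := by
      have e1 : (z : D) + (z : D) * x = (z : D) * (1 + x) := by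
        rw [mul_add, mul_one]
      rw [e1, hzx, add_mul, one_mul, hyx]
    by_cases hyz : (y : D) = (z : D)
    · have hza : (z : D) = (a : D) := by
        rw [hyz] at h2
        exact add_right_cancel h2
      have : (1 + x) * (a : D) = (a : D) * (1 + x) := by
        rw [← hzx, hza]
      have hax : (a : D) * x = x * (a : D) := by
        have := this
        rw [add_mul, mul_add, one_mul, mul_one] at this
        exact (add_left_cancel this).symm
      exact hax.symm
    · have h3 : ((y : D) - (z : D)) * x = (z : D) - (a : D) := by
        rw [sub_mul, sub_eq_sub_iff_add_eq_add, h2, add_comm]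
      have hyz0 : (y : D) - (z : D) ≠ 0 := sub_ne_zero.2 hyz
      have hxeq : x = ((y : D) - (z : D))⁻¹ * ((z : D) - (a : D)) := by
        rw [← h3, inv_mul_cancel_left₀ hyz0]
      have c1 : Commute (a : D) ((y : D) - (z : D)) := cay.sub_right caz
      have c2 : Commute (a : D) (((y : D) - (z : D))⁻¹) := c1.inv_right₀
      have c3 : Commute (a : D) ((z : D) - (a : D)) := caz.sub_right (Commute.refl _)
      have : Commute (a : D) x := by
        rw [hxeq]
        exact c2.mul_right c3
      exact this.symm.eq

theorem stmt8 (D : Type*) [DivisionRing D] (hF : Finite (Subring.center D))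
    (G : Subgroup Dˣ) (hfin : Finite G) (hsub : G.IsSubnormal') :
    ∀ g ∈ G, (g : D) ∈ Subring.center D := by
  obtain ⟨n, c, hc0, hcn, hstep⟩ := hsub
  -- the characteristic is positive
  set q := ringChar D with hqdef
  have hq : CharP D q := ringChar.charP D
  have hq0 : q ≠ 0 := by
    rintro h
    rw [h] at hq
    haveI : CharP D 0 := hq
    haveI : CharZero D := CharP.charP_to_charZero D
    have hinj : Function.Injective
        (fun m : ℕ => (⟨(m : D), natCast_mem (Subring.center D) m⟩ : Subring.center D)) := by
      intro m k hmk
      exact Nat.cast_injective (congrArg Subtype.val hmk)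
    haveI := Finite.of_injective _ hinj
    exact not_finite ℕ
  -- the exponent
  set e := Nat.card G with hedef
  have he : e ≠ 0 := Nat.card_pos.ne'
  have hGe : ∀ g ∈ G, g ^ e = 1 := by
    intro g hg
    have h1 : (⟨g, hg⟩ : G) ^ e = 1 := pow_card_eq_one'
    have := congrArg (fun u : G => (u : Dˣ)) h1
    simpa using this
  -- conjugation into lower chain levels
  have hchain : ∀ i, i < n → ∀ y ∈ c (i+1), ∀ w ∈ c i, y * w * y⁻¹ ∈ c i := by
    intro i hi y hy w hw
    have hle := (hstep i hi).1
    have hnorm := (hstep i hi).2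
    have h3 := hnorm.conj_mem ⟨w, hle hw⟩ (by rwa [Subgroup.mem_subgroupOf]) ⟨y, hy⟩
    rw [Subgroup.mem_subgroupOf] at h3
    simpa using h3
  -- the main induction: an increasing sequence of abelian exponent-`e` subgroups,
  -- each normalized by the corresponding chain level
  have main : ∀ i, i ≤ n → ∃ N : Subgroup Dˣ, G ≤ N ∧ N ≤ c i ∧
      (∀ x ∈ c i, ∀ g ∈ N, x * g * x⁻¹ ∈ N) ∧
      (∀ a ∈ N, ∀ b ∈ N, a * b = b * a) ∧ (∀ g ∈ N, g ^ e = 1) := by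
    intro i
    induction i with
    | zero =>
      intro _
      refine ⟨G, le_rfl, le_of_eq hc0.symm, ?_, ?_, hGe⟩
      · intro x hx g hg
        rw [hc0] at hx
        exact G.mul_mem (G.mul_mem hx hg) (G.inv_mem hx)
      · haveI : Finite (G : Set Dˣ) := hfin
        exact units_fin_mulclosed_comm hq hq0 (G : Set Dˣ) (Set.toFinite _) G.one_mem
          (fun a ha b hb => G.mul_mem ha hb)
    | succ i ih =>
      intro hin
      have hi : i < n := hin
      obtain ⟨N, hGN, hNle, hNconj, hNcomm, hNe⟩ := ih (Nat.le_of_lt hi)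
      have hstep_le : c i ≤ c (i+1) := (hstep i hi).1
      -- the conjugates of `N`
      set SS : Set Dˣ := {u | ∃ y, y ∈ c (i+1) ∧ ∃ g, g ∈ N ∧ u = y * g * y⁻¹} with hSSdef
      have hSSsub : ∀ u ∈ SS, u ∈ c i := by
        rintro u ⟨y, hy, g, hg, rfl⟩
        exact hchain i hi y hy g (hNle hg)
      -- conjugated copies of N
      have amul : ∀ y u v, (∃ g, g ∈ N ∧ u = y * g * y⁻¹) → (∃ g, g ∈ N ∧ v = y * g * y⁻¹) →
          (∃ g, g ∈ N ∧ u * v = y * g * y⁻¹) := by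
        rintro y _ _ ⟨g, hg, rfl⟩ ⟨h, hh, rfl⟩
        exact ⟨g * h, N.mul_mem hg hh, by group⟩
      have ainv : ∀ y u, (∃ g, g ∈ N ∧ u = y * g * y⁻¹) →
          (∃ g, g ∈ N ∧ u⁻¹ = y * g * y⁻¹) := by
        rintro y _ ⟨g, hg, rfl⟩
        exact ⟨g⁻¹, N.inv_mem hg, by group⟩
      have acomm : ∀ y u v, (∃ g, g ∈ N ∧ u = y * g * y⁻¹) → (∃ g, g ∈ N ∧ v = y * g * y⁻¹) →
          u * v = v * u := by
        rintro y _ _ ⟨g, hg, rfl⟩ ⟨h, hh, rfl⟩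
        have hcgh := hNcomm g hg h hh
        calc (y * g * y⁻¹) * (y * h * y⁻¹) = y * (g * h) * y⁻¹ := by group
          _ = y * (h * g) * y⁻¹ := by rw [hcgh]
          _ = (y * h * y⁻¹) * (y * g * y⁻¹) := by group
      have apow : ∀ y u, (∃ g, g ∈ N ∧ u = y * g * y⁻¹) → u ^ e = 1 := by
        rintro y _ ⟨g, hg, rfl⟩
        have h1 : y * g * y⁻¹ = (MulAut.conj y) g := (MulAut.conj_apply y g).symm
        rw [h1, ← map_pow, hNe g hg, map_one]
      have aconj : ∀ y, y ∈ c (i+1) → ∀ w ∈ c i, ∀ u, (∃ g, g ∈ N ∧ u = y * g * y⁻¹) →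
          (∃ g, g ∈ N ∧ w * u * w⁻¹ = y * g * y⁻¹) := by
        rintro y hy w hw _ ⟨g, hg, rfl⟩
        have hw' : y⁻¹ * w * y ∈ c i := by
          have := hchain i hi y⁻¹ ((c (i+1)).inv_mem hy) w hw
          rwa [inv_inv] at this
        exact ⟨(y⁻¹ * w * y) * g * (y⁻¹ * w * y)⁻¹, hNconj _ hw' g hg, by group⟩
      -- elements of SS pairwise commute
      have hSScomm : ∀ s ∈ SS, ∀ t ∈ SS, s * t = t * s := by
        rintro s hsSS t htSS
        obtain ⟨y, hy, a', ha', hs⟩ := hsSS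
        obtain ⟨z, hz, b', hb', ht⟩ := htSS
        have hsA : ∃ g, g ∈ N ∧ s = y * g * y⁻¹ := ⟨a', ha', hs⟩
        have htA : ∃ g, g ∈ N ∧ t = z * g * z⁻¹ := ⟨b', hb', ht⟩
        have hsci : s ∈ c i := hSSsub s ⟨y, hy, a', ha', hs⟩
        have htci : t ∈ c i := hSSsub t ⟨z, hz, b', hb', ht⟩
        -- the commutator
        have hdAy : ∃ g, g ∈ N ∧ t⁻¹ * s⁻¹ * t * s = y * g * y⁻¹ := by
          have h1 := aconj y hy t⁻¹ ((c i).inv_mem htci) s⁻¹ (ainv y s hsA)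
          rw [inv_inv] at h1
          have h2 := amul y _ _ h1 hsA
          have heq : t⁻¹ * s⁻¹ * t * s = (t⁻¹ * s⁻¹ * t) * s := by group
          rwa [heq]
        have hdAz : ∃ g, g ∈ N ∧ t⁻¹ * s⁻¹ * t * s = z * g * z⁻¹ := by
          have h1 := aconj z hz s⁻¹ ((c i).inv_mem hsci) t (htA)
          rw [inv_inv] at h1
          have h2 := amul z _ _ (ainv z t htA) h1
          have heq : t⁻¹ * s⁻¹ * t * s = t⁻¹ * (s⁻¹ * t * s) := by group
          rwa [heq]
        refine commute_of_braided hq hq0 he s t (t⁻¹ * s⁻¹ * t * s) (by group) ?_ ?_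
          (apow y s hsA) (apow z t htA) (apow y _ hdAy)
        · exact acomm y s _ hsA hdAy
        · exact acomm z t _ htA hdAz
      have hcommN' : ∀ a ∈ Subgroup.closure SS, ∀ b ∈ Subgroup.closure SS, a * b = b * a := by
        intro a ha b hb
        exact Subgroup.closure_induction₂ (p := fun x y _ _ => x * y = y * x)
          (fun x y hx hy => hSScomm x hx y hy)
          (fun x hx => Commute.one_left x) (fun x hx => Commute.one_right x)
          (fun x y z hx hy hz h1 h2 => (Commute.mul_left h1 h2 : _))
          (fun y z x hy hz hx h1 h2 => (Commute.mul_right h1 h2 : _))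
          (fun x y hx hy h => (Commute.inv_left h : _)) (fun x y hx hy h => (Commute.inv_right h : _)) ha hb
      -- the next subgroup
      refine ⟨Subgroup.closure SS, ?_, ?_, ?_, ?_, ?_⟩
      · intro g hg
        exact Subgroup.subset_closure ⟨1, (c (i+1)).one_mem, g, hGN hg, by simp⟩
      · refine (Subgroup.closure_le _).2 ?_
        intro u hu
        exact hstep_le (hSSsub u hu)
      · intro x hx u hu
        induction hu using Subgroup.closure_induction with
        | mem v hv =>
          obtain ⟨y, hy, g, hg, rfl⟩ := hv
          exact Subgroup.subset_closure ⟨x * y, (c (i+1)).mul_mem hx hy, g, hg, by group⟩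
        | one => simpa using (Subgroup.closure SS).one_mem
        | mul u v hu hv hu' hv' =>
          have heq : x * (u * v) * x⁻¹ = (x * u * x⁻¹) * (x * v * x⁻¹) := by group
          rw [heq]
          exact (Subgroup.closure SS).mul_mem hu' hv'
        | inv u hu hu' =>
          have heq : x * u⁻¹ * x⁻¹ = (x * u * x⁻¹)⁻¹ := by group
          rw [heq]
          exact (Subgroup.closure SS).inv_mem hu'
      · exact hcommN'
      · intro g hg
        induction hg using Subgroup.closure_induction with
        | mem u hu =>
          obtain ⟨y, hy, g', hg', rfl⟩ := hu
          have h1 : y * g' * y⁻¹ = (MulAut.conj y) g' := (MulAut.conj_apply y g').symm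
          rw [h1, ← map_pow, hNe g' hg', map_one]
        | one => exact one_pow e
        | mul u v hu hv hu' hv' =>
          have hc : Commute u v := hcommN' u hu v hv
          rw [hc.mul_pow, hu', hv', one_mul]
        | inv u hu hu' => rw [inv_pow, hu', inv_one]
  obtain ⟨N, hGN, _, hNconj, hNcomm, _⟩ := main n le_rfl
  have hNconj' : ∀ (x : Dˣ), ∀ g ∈ N, x * g * x⁻¹ ∈ N := by
    intro x g hg
    exact hNconj x (by rw [hcn]; trivial) g hg
  intro g hg
  exact abelian_normal_central N hNconj' hNcomm g (hGN hg)
end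

section
/- Let G be a group, τ(G) its unique maximal periodic normal subgroup, and B(G) the subgroup with B(G)/τ(G) the Hirsch–Plotkin radical of G/τ(G). If τ(G) is contained in the center of G (more generally, if every finitely generated subgroup H of B(G) satisfies [[H,H],...,H] ⊆ τ(G) ⊆ Z(G)), then B(G) is locally nilpotent. -/
theorem stmt15 (G : Type*) [Group G] (T B : Subgroup G) [hTn : T.Normal]
    (hTZ : T ≤ Subgroup.center G) (hTB : T ≤ B)
    (hBn : (B.map (QuotientGroup.mk' T)).Normal)
    (hBnil : LocallyNilpotentGroup (B.map (QuotientGroup.mk' T)))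
    (hBmax : ∀ C : Subgroup (G ⧸ T), C.Normal → LocallyNilpotentGroup C →
      C ≤ B.map (QuotientGroup.mk' T)) :
    LocallyNilpotentGroup B := by
  classical
  intro s
  set H : Subgroup B := Subgroup.closure (s : Set B) with hH
  set g : B →* (G ⧸ T) := (QuotientGroup.mk' T).comp B.subtype with hg
  set f : H →* (G ⧸ T) := g.comp H.subtype with hf
  have hmem : ∀ b : B, g b ∈ B.map (QuotientGroup.mk' T) := fun b =>
    ⟨(b : G), b.2, rfl⟩
  set t : Finset (B.map (QuotientGroup.mk' T)) :=
    s.image (fun b => (⟨g b, hmem b⟩ : (B.map (QuotientGroup.mk' T)))) with ht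
  have hnil : Group.IsNilpotent (Subgroup.closure (t : Set (B.map (QuotientGroup.mk' T)))) :=
    hBnil t
  have hrange : f.range = Subgroup.map (B.map (QuotientGroup.mk' T)).subtype
      (Subgroup.closure (t : Set (B.map (QuotientGroup.mk' T)))) := by
    rw [hf, MonoidHom.range_comp, Subgroup.range_subtype, hH, MonoidHom.map_closure,
      MonoidHom.map_closure]
    congr 1
    ext x
    simp only [ht, Finset.coe_image, Set.image_image]
    rfl
  have hrange_nil : Group.IsNilpotent f.range := by
    rw [hrange]
    exact nilpotent_of_surjective
      ((Subgroup.closure (t : Set (B.map (QuotientGroup.mk' T)))).equivMapOfInjective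
        (B.map (QuotientGroup.mk' T)).subtype (Subgroup.subtype_injective _)).toMonoidHom
      (MulEquiv.surjective _)
  refine @isNilpotent_of_ker_le_center _ _ _ _ f.rangeRestrict ?_ hrange_nil
  rw [MonoidHom.ker_rangeRestrict]
  intro x hx
  have hxT : ((x : B) : G) ∈ T := by
    have : QuotientGroup.mk' T ((x : B) : G) = 1 := hx
    rwa [← QuotientGroup.ker_mk' T, MonoidHom.mem_ker]
  rw [Subgroup.mem_center_iff]
  intro y
  refine Subtype.ext (Subtype.ext ?_)
  exact Subgroup.mem_center_iff.mp (hTZ hxT) _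
end
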